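/- Let M be a Garside monoid (a cancellative atomic monoid satisfying the LCM condition and possessing a fundamental element). Then there exists a unique fundamental element Δ̂ such that every fundamental element of M is left-divisible and right-divisible by Δ̂; i.e., the subsemigroup F(M) of fundamental elements is singly generated as a two-sided ideal of QZ(M). -/

import Mathlib

/-- An atom of a monoid: a non-identity element that is indecomposable. -/
def IsMonAtom {M : Type*} [Monoid M] (a : M) : Prop :=
  a ≠ 1 ∧ ∀ b c : M, a = b * c → b = 1 ∨ c = 1

/-- A monoid is atomic if it carries a norm `ν` with `ν α = 0 ↔ α = 1` and
`ν (αβ) ≥ ν α + ν β`. -/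
def IsAtomicMonoid (M : Type*) [Monoid M] : Prop :=
  ∃ ν : M → ℕ, (∀ a : M, ν a = 0 ↔ a = 1) ∧ ∀ a b : M, ν a + ν b ≤ ν (a * b)

/-- Cancellation condition: `a * x * b = a * y * b` implies `x = y`. -/
def IsCancellative (M : Type*) [Monoid M] : Prop :=
  ∀ a b x y : M, a * x * b = a * y * b → x = y

/-- The monoid is generated by its atoms. -/
def GeneratedByAtoms (M : Type*) [Monoid M] : Prop :=
  Submonoid.closure {a : M | IsMonAtom a} = ⊤

/-- Quasi-central element: `s·Δ = Δ·σ(s)` for a permutation `σ` of the atoms. -/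
def IsQuasiCentral {M : Type*} [Monoid M] (Δ : M) : Prop :=
  ∃ σ : {a : M // IsMonAtom a} ≃ {a : M // IsMonAtom a},
    ∀ s : {a : M // IsMonAtom a}, (s : M) * Δ = Δ * (σ s : M)

/-- Fundamental element: there is a permutation `σ` of the atoms such that for every
atom `s` one has `Δ = s·Δ_s = Δ_s·σ(s)` for some `Δ_s`. -/
def IsFundamental {M : Type*} [Monoid M] (Δ : M) : Prop :=
  ∃ σ : {a : M // IsMonAtom a} ≃ {a : M // IsMonAtom a},
    ∀ s : {a : M // IsMonAtom a}, ∃ d : M, Δ = (s : M) * d ∧ Δ = d * (σ s : M)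


/-- `m` is a right least common multiple of `u` and `v`. -/
def IsRightLcm {M : Type*} [Monoid M] (u v m : M) : Prop :=
  (∃ w, m = u * w) ∧ (∃ w, m = v * w) ∧
    ∀ m' : M, (∃ w, m' = u * w) → (∃ w, m' = v * w) → ∃ w, m' = m * w

/-- `m` is a left least common multiple of `u` and `v`. -/
def IsLeftLcm {M : Type*} [Monoid M] (u v m : M) : Prop :=
  (∃ w, m = w * u) ∧ (∃ w, m = w * v) ∧
    ∀ m' : M, (∃ w, m' = w * u) → (∃ w, m' = w * v) → ∃ w, m' = w * m

/-- `d` is a left greatest common divisor of `u` and `v`. -/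
def IsLeftGcd {M : Type*} [Monoid M] (u v d : M) : Prop :=
  (∃ w, u = d * w) ∧ (∃ w, v = d * w) ∧
    ∀ d' : M, (∃ w, u = d' * w) → (∃ w, v = d' * w) → ∃ w, d = d' * w

/-- `d` is a right greatest common divisor of `u` and `v`. -/
def IsRightGcd {M : Type*} [Monoid M] (u v d : M) : Prop :=
  (∃ w, u = w * d) ∧ (∃ w, v = w * d) ∧
    ∀ d' : M, (∃ w, u = w * d') → (∃ w, v = w * d') → ∃ w, d = w * d'


section Aux
variable {M : Type*} [Monoid M]

theorem myLCancel (hcan : IsCancellative M) {a x y : M} (h : a * x = a * y) : x = y :=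
  hcan a 1 x y (by rw [mul_one, mul_one]; exact h)

theorem myRCancel (hcan : IsCancellative M) {a x y : M} (h : x * a = y * a) : x = y :=
  hcan 1 a x y (by rw [one_mul, one_mul]; exact h)

theorem myMulEqOne (ν : M → ℕ) (hν0 : ∀ a : M, ν a = 0 ↔ a = 1)
    (hνadd : ∀ a b : M, ν a + ν b ≤ ν (a * b)) {a b : M} (h : a * b = 1) :
    a = 1 ∧ b = 1 := by
  have h1 : ν (a*b) = 0 := by rw [h]; exact (hν0 1).mpr rfl
  have h2 := hνadd a b
  exact ⟨(hν0 a).mp (by omega), (hν0 b).mp (by omega)⟩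

theorem myAntisymm (hcan : IsCancellative M) (ν : M → ℕ)
    (hν0 : ∀ a : M, ν a = 0 ↔ a = 1) (hνadd : ∀ a b : M, ν a + ν b ≤ ν (a * b))
    {a b w w' : M} (h1 : a = b * w) (h2 : b = a * w') : a = b := by
  have h3 : b * 1 = b * (w * w') := by rw [mul_one, ← mul_assoc, ← h1, ← h2]
  have h4 := (myLCancel hcan h3).symm
  have := (myMulEqOne ν hν0 hνadd h4).1
  rw [h1, this, mul_one]

theorem exists_atomList (hgen : GeneratedByAtoms M) (a : M) :
    ∃ l : List M, (∀ x ∈ l, IsMonAtom x) ∧ a = l.prod := by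
  have ha : a ∈ Submonoid.closure {a : M | IsMonAtom a} := by rw [hgen]; trivial
  induction ha using Submonoid.closure_induction with
  | mem x hx => exact ⟨[x], by simpa using hx, by simp⟩
  | one => exact ⟨[], by simp, by simp⟩
  | mul x y hx hy ihx ihy =>
      obtain ⟨l1, hl1, rfl⟩ := ihx
      obtain ⟨l2, hl2, rfl⟩ := ihy
      refine ⟨l1 ++ l2, ?_, by simp⟩
      intro z hz
      rcases List.mem_append.mp hz with h | h
      exacts [hl1 z h, hl2 z h]

theorem exists_isLeftGcd (hcan : IsCancellative M) (ν : M → ℕ)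
    (hν0 : ∀ a : M, ν a = 0 ↔ a = 1) (hνadd : ∀ a b : M, ν a + ν b ≤ ν (a * b))
    (hlcm : ∀ u v : M, (∃ m, IsRightLcm u v m) ∧ (∃ m, IsLeftLcm u v m))
    (u v : M) : ∃ d, IsLeftGcd u v d := by
  classical
  set P : ℕ → Prop := fun n => ∃ d w1 w2 : M, u = d * w1 ∧ v = d * w2 ∧ ν d = n with hP
  have hP0 : P 0 := ⟨1, u, v, (one_mul u).symm, (one_mul v).symm, (hν0 1).mpr rfl⟩
  obtain ⟨d, w1, w2, h1, h2, hd⟩ :=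
    Nat.findGreatest_spec (P := P) (n := ν u) (Nat.zero_le _) hP0
  refine ⟨d, ⟨w1, h1⟩, ⟨w2, h2⟩, ?_⟩
  rintro d' ⟨a, ha⟩ ⟨b, hb⟩
  obtain ⟨⟨m, ⟨k, hk⟩, ⟨k', hk'⟩, hmin⟩, -⟩ := hlcm d d'
  obtain ⟨wu, hwu⟩ := hmin u ⟨w1, h1⟩ ⟨a, ha⟩
  obtain ⟨wv, hwv⟩ := hmin v ⟨w2, h2⟩ ⟨b, hb⟩
  have hmu : ν m ≤ ν u := by have := hνadd m wu; rw [← hwu] at this; omega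
  have hPm : P (ν m) := ⟨m, wu, wv, hwu, hwv, rfl⟩
  have hmd : ν m ≤ ν d := hd ▸ Nat.le_findGreatest hmu hPm
  have hk1 : k = 1 := by
    have := hνadd d k; rw [← hk] at this
    exact (hν0 k).mp (by omega)
  rw [hk1, mul_one] at hk
  exact ⟨k', by rw [← hk, hk']⟩

theorem exists_isRightGcd (hcan : IsCancellative M) (ν : M → ℕ)
    (hν0 : ∀ a : M, ν a = 0 ↔ a = 1) (hνadd : ∀ a b : M, ν a + ν b ≤ ν (a * b))
    (hlcm : ∀ u v : M, (∃ m, IsRightLcm u v m) ∧ (∃ m, IsLeftLcm u v m))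
    (u v : M) : ∃ d, IsRightGcd u v d := by
  classical
  set P : ℕ → Prop := fun n => ∃ d w1 w2 : M, u = w1 * d ∧ v = w2 * d ∧ ν d = n with hP
  have hP0 : P 0 := ⟨1, u, v, (mul_one u).symm, (mul_one v).symm, (hν0 1).mpr rfl⟩
  obtain ⟨d, w1, w2, h1, h2, hd⟩ :=
    Nat.findGreatest_spec (P := P) (n := ν u) (Nat.zero_le _) hP0
  refine ⟨d, ⟨w1, h1⟩, ⟨w2, h2⟩, ?_⟩
  rintro d' ⟨a, ha⟩ ⟨b, hb⟩
  obtain ⟨-, ⟨m, ⟨k, hk⟩, ⟨k', hk'⟩, hmin⟩⟩ := hlcm d d'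
  obtain ⟨wu, hwu⟩ := hmin u ⟨w1, h1⟩ ⟨a, ha⟩
  obtain ⟨wv, hwv⟩ := hmin v ⟨w2, h2⟩ ⟨b, hb⟩
  have hmu : ν m ≤ ν u := by have := hνadd wu m; rw [← hwu] at this; omega
  have hPm : P (ν m) := ⟨m, wu, wv, hwu, hwv, rfl⟩
  have hmd : ν m ≤ ν d := hd ▸ Nat.le_findGreatest hmu hPm
  have hk1 : k = 1 := by
    have := hνadd k d; rw [← hk] at this
    exact (hν0 k).mp (by omega)
  rw [hk1, one_mul] at hk
  exact ⟨k', by rw [← hk, hk']⟩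

theorem fund_qc {Δ : M} {σ : {a : M // IsMonAtom a} ≃ {a : M // IsMonAtom a}}
    (hσ : ∀ s : {a : M // IsMonAtom a}, ∃ d : M, Δ = (s : M) * d ∧ Δ = d * (σ s : M))
    (s : {a : M // IsMonAtom a}) : (s : M) * Δ = Δ * (σ s : M) := by
  obtain ⟨d, h1, h2⟩ := hσ s
  conv_lhs => rw [h2]
  rw [← mul_assoc, ← h1]

theorem fund_qc' {Δ : M} {σ : {a : M // IsMonAtom a} ≃ {a : M // IsMonAtom a}}
    (hσ : ∀ s : {a : M // IsMonAtom a}, ∃ d : M, Δ = (s : M) * d ∧ Δ = d * (σ s : M))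
    (t : {a : M // IsMonAtom a}) : ((σ.symm t : M)) * Δ = Δ * (t : M) := by
  have := fund_qc hσ (σ.symm t)
  rwa [Equiv.apply_symm_apply] at this

theorem fund_pushR {Δ : M} (hgen : GeneratedByAtoms M)
    {σ : {a : M // IsMonAtom a} ≃ {a : M // IsMonAtom a}}
    (hσ : ∀ s : {a : M // IsMonAtom a}, ∃ d : M, Δ = (s : M) * d ∧ Δ = d * (σ s : M))
    (x : M) : ∃ y, x * Δ = Δ * y := by
  obtain ⟨l, hl, rfl⟩ := exists_atomList hgen x
  induction l with
  | nil => exact ⟨1, by simp⟩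
  | cons t l ih =>
      obtain ⟨y, hy⟩ := ih (fun z hz => hl z (List.mem_cons_of_mem t hz))
      have ht : IsMonAtom t := hl t (List.mem_cons_self)
      refine ⟨(σ ⟨t, ht⟩ : M) * y, ?_⟩
      have hqc := fund_qc hσ ⟨t, ht⟩
      calc (t :: l).prod * Δ = t * (l.prod * Δ) := by rw [List.prod_cons, mul_assoc]
        _ = t * (Δ * y) := by rw [hy]
        _ = (t * Δ) * y := by rw [mul_assoc]
        _ = (Δ * (σ ⟨t, ht⟩ : M)) * y := by rw [hqc]
        _ = Δ * ((σ ⟨t, ht⟩ : M) * y) := by rw [mul_assoc]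

theorem fund_pushL {Δ : M} (hgen : GeneratedByAtoms M)
    {σ : {a : M // IsMonAtom a} ≃ {a : M // IsMonAtom a}}
    (hσ : ∀ s : {a : M // IsMonAtom a}, ∃ d : M, Δ = (s : M) * d ∧ Δ = d * (σ s : M))
    (y : M) : ∃ x, x * Δ = Δ * y := by
  obtain ⟨l, hl, rfl⟩ := exists_atomList hgen y
  induction l with
  | nil => exact ⟨1, by simp⟩
  | cons t l ih =>
      obtain ⟨x, hx⟩ := ih (fun z hz => hl z (List.mem_cons_of_mem t hz))
      have ht : IsMonAtom t := hl t (List.mem_cons_self)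
      refine ⟨(σ.symm ⟨t, ht⟩ : M) * x, ?_⟩
      have hqc := fund_qc' hσ ⟨t, ht⟩
      calc (σ.symm ⟨t, ht⟩ : M) * x * Δ = (σ.symm ⟨t, ht⟩ : M) * (x * Δ) := by rw [mul_assoc]
        _ = (σ.symm ⟨t, ht⟩ : M) * (Δ * l.prod) := by rw [hx]
        _ = ((σ.symm ⟨t, ht⟩ : M) * Δ) * l.prod := by rw [mul_assoc]
        _ = (Δ * t) * l.prod := by rw [hqc]
        _ = Δ * (t :: l).prod := by rw [List.prod_cons, mul_assoc]

theorem fund_rdvd_of_ldvd (hcan : IsCancellative M) (hgen : GeneratedByAtoms M)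
    {Δ : M} (hΔ : IsFundamental Δ) {x y : M} (h : Δ = x * y) : ∃ z, Δ = z * x := by
  obtain ⟨σ, hσ⟩ := hΔ
  obtain ⟨y', hy'⟩ := fund_pushL hgen hσ y
  refine ⟨y', myRCancel hcan (a := y) ?_⟩
  rw [mul_assoc, ← h]; exact hy'.symm

theorem fund_ldvd_of_rdvd (hcan : IsCancellative M) (hgen : GeneratedByAtoms M)
    {Δ : M} (hΔ : IsFundamental Δ) {x y : M} (h : Δ = y * x) : ∃ z, Δ = x * z := by
  obtain ⟨σ, hσ⟩ := hΔ
  obtain ⟨y'', hy''⟩ := fund_pushR hgen hσ y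
  refine ⟨y'', myLCancel hcan (a := y) ?_⟩
  rw [← mul_assoc, ← h]; exact hy''

theorem fund_atom_ldvd {Δ : M} (hΔ : IsFundamental Δ) {s : M} (hs : IsMonAtom s) :
    ∃ d, Δ = s * d := by
  obtain ⟨σ, hσ⟩ := hΔ
  obtain ⟨d, h1, -⟩ := hσ ⟨s, hs⟩
  exact ⟨d, h1⟩

theorem fund_atom_rdvd {Δ : M} (hΔ : IsFundamental Δ) {t : M} (ht : IsMonAtom t) :
    ∃ d, Δ = d * t := by
  obtain ⟨σ, hσ⟩ := hΔ
  obtain ⟨d, -, h2⟩ := hσ (σ.symm ⟨t, ht⟩)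
  rw [Equiv.apply_symm_apply] at h2
  exact ⟨d, h2⟩

theorem leftGcd_isRightGcd (hcan : IsCancellative M) (ν : M → ℕ)
    (hν0 : ∀ a : M, ν a = 0 ↔ a = 1) (hνadd : ∀ a b : M, ν a + ν b ≤ ν (a * b))
    (hgen : GeneratedByAtoms M)
    (hlcm : ∀ u v : M, (∃ m, IsRightLcm u v m) ∧ (∃ m, IsLeftLcm u v m))
    {Δ1 Δ2 g : M} (h1 : IsFundamental Δ1) (h2 : IsFundamental Δ2)
    (hg : IsLeftGcd Δ1 Δ2 g) : IsRightGcd Δ1 Δ2 g := by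
  obtain ⟨g', hg'⟩ := exists_isRightGcd hcan ν hν0 hνadd hlcm Δ1 Δ2
  obtain ⟨w1, hw1⟩ := hg'.1
  obtain ⟨w2, hw2⟩ := hg'.2.1
  obtain ⟨z1, hz1⟩ := fund_ldvd_of_rdvd hcan hgen h1 hw1
  obtain ⟨z2, hz2⟩ := fund_ldvd_of_rdvd hcan hgen h2 hw2
  obtain ⟨a, hga⟩ := hg.2.2 g' ⟨z1, hz1⟩ ⟨z2, hz2⟩
  obtain ⟨u1, hu1⟩ := hg.1
  obtain ⟨u2, hu2⟩ := hg.2.1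
  obtain ⟨c1, hc1⟩ := fund_rdvd_of_ldvd hcan hgen h1 hu1
  obtain ⟨c2, hc2⟩ := fund_rdvd_of_ldvd hcan hgen h2 hu2
  obtain ⟨b, hgb⟩ := hg'.2.2 g ⟨c1, hc1⟩ ⟨c2, hc2⟩
  have key : g = b * g * a := by rw [← hgb, ← hga]
  have hν1 : ν b + ν g ≤ ν (b * g) := hνadd b g
  have hν2 : ν (b * g) + ν a ≤ ν (b * g * a) := hνadd (b * g) a
  have hν3 : ν (b * g * a) = ν g := by rw [← key]
  have hane : a = 1 := (hν0 a).mp (by omega)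
  have : g = g' := by rw [hga, hane, mul_one]
  rw [this]; exact hg'

theorem isFundamental_leftGcd (hcan : IsCancellative M) (ν : M → ℕ)
    (hν0 : ∀ a : M, ν a = 0 ↔ a = 1) (hνadd : ∀ a b : M, ν a + ν b ≤ ν (a * b))
    (hgen : GeneratedByAtoms M)
    (hlcm : ∀ u v : M, (∃ m, IsRightLcm u v m) ∧ (∃ m, IsLeftLcm u v m))
    {Δ1 Δ2 g : M} (h1 : IsFundamental Δ1) (h2 : IsFundamental Δ2)
    (hg : IsLeftGcd Δ1 Δ2 g) : IsFundamental g := by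
  have hrg := leftGcd_isRightGcd hcan ν hν0 hνadd hgen hlcm h1 h2 hg
  obtain ⟨σ1, hσ1⟩ := h1
  obtain ⟨σ2, hσ2⟩ := h2
  -- every atom left-divides g
  have hatomL : ∀ s : M, IsMonAtom s → ∃ h, g = s * h := by
    intro s hs
    obtain ⟨d1, hd1⟩ := fund_atom_ldvd ⟨σ1, hσ1⟩ hs
    obtain ⟨d2, hd2⟩ := fund_atom_ldvd ⟨σ2, hσ2⟩ hs
    exact hg.2.2 s ⟨d1, hd1⟩ ⟨d2, hd2⟩
  -- push an atom through g, from left to right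
  have pushFwd : ∀ s : M, IsMonAtom s → ∃ t, s * g = g * t ∧ t ≠ 1 := by
    intro s hs
    obtain ⟨u1, hu1⟩ := hg.1
    obtain ⟨u2, hu2⟩ := hg.2.1
    obtain ⟨⟨m, ⟨b, hb⟩, ⟨a, ha⟩, hmin⟩, -⟩ := hlcm g s
    have e1 : s * Δ1 = g * (u1 * (σ1 ⟨s, hs⟩ : M)) := by
      rw [fund_qc hσ1 ⟨s, hs⟩]
      conv_lhs => rw [hu1]
      rw [mul_assoc]
    have e2 : s * Δ2 = g * (u2 * (σ2 ⟨s, hs⟩ : M)) := by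
      rw [fund_qc hσ2 ⟨s, hs⟩]
      conv_lhs => rw [hu2]
      rw [mul_assoc]
    obtain ⟨w1, hw1⟩ := hmin (s * Δ1) ⟨u1 * (σ1 ⟨s, hs⟩ : M), e1⟩ ⟨Δ1, rfl⟩
    obtain ⟨w2, hw2⟩ := hmin (s * Δ2) ⟨u2 * (σ2 ⟨s, hs⟩ : M), e2⟩ ⟨Δ2, rfl⟩
    have ha1 : Δ1 = a * w1 := by
      apply myLCancel hcan (a := s)
      rw [← mul_assoc, ← ha, ← hw1]
    have ha2 : Δ2 = a * w2 := by
      apply myLCancel hcan (a := s)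
      rw [← mul_assoc, ← ha, ← hw2]
    obtain ⟨e, he⟩ := hg.2.2 a ⟨w1, ha1⟩ ⟨w2, ha2⟩
    have hsg : s * g = g * (b * e) := by
      conv_lhs => rw [he]
      rw [← mul_assoc, ← ha, hb, mul_assoc]
    refine ⟨b * e, hsg, ?_⟩
    intro hbe
    rw [hbe, mul_one] at hsg
    have hl := hνadd s g
    rw [hsg] at hl
    exact hs.1 ((hν0 s).mp (by omega))
  -- push an atom through g, from right to left
  have pushBwd : ∀ t : M, IsMonAtom t → ∃ s, g * t = s * g ∧ s ≠ 1 := by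
    intro t ht
    obtain ⟨c1, hc1⟩ := hrg.1
    obtain ⟨c2, hc2⟩ := hrg.2.1
    obtain ⟨-, ⟨m, ⟨b, hb⟩, ⟨a, ha⟩, hmin⟩⟩ := hlcm g t
    have e1 : Δ1 * t = ((σ1.symm ⟨t, ht⟩ : M) * c1) * g := by
      rw [← fund_qc' hσ1 ⟨t, ht⟩]
      conv_lhs => rw [hc1]
      rw [← mul_assoc]
    have e2 : Δ2 * t = ((σ2.symm ⟨t, ht⟩ : M) * c2) * g := by
      rw [← fund_qc' hσ2 ⟨t, ht⟩]
      conv_lhs => rw [hc2]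
      rw [← mul_assoc]
    obtain ⟨w1, hw1⟩ := hmin (Δ1 * t) ⟨(σ1.symm ⟨t, ht⟩ : M) * c1, e1⟩ ⟨Δ1, rfl⟩
    obtain ⟨w2, hw2⟩ := hmin (Δ2 * t) ⟨(σ2.symm ⟨t, ht⟩ : M) * c2, e2⟩ ⟨Δ2, rfl⟩
    have ha1 : Δ1 = w1 * a := by
      apply myRCancel hcan (a := t)
      rw [mul_assoc, ← ha, ← hw1]
    have ha2 : Δ2 = w2 * a := by
      apply myRCancel hcan (a := t)
      rw [mul_assoc, ← ha, ← hw2]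
    obtain ⟨e, he⟩ := hrg.2.2 a ⟨w1, ha1⟩ ⟨w2, ha2⟩
    have hgt : g * t = (e * b) * g := by
      conv_lhs => rw [he]
      rw [mul_assoc, ← ha, hb, ← mul_assoc]
    refine ⟨e * b, hgt, ?_⟩
    intro heb
    rw [heb, one_mul] at hgt
    have hl := hνadd g t
    rw [hgt] at hl
    exact ht.1 ((hν0 t).mp (by omega))
  -- pushing lists of atoms
  have pushListBwd : ∀ l : List M, (∀ x ∈ l, IsMonAtom x) →
      ∃ l' : List M, (∀ x ∈ l', x ≠ 1) ∧ g * l.prod = l'.prod * g ∧ l'.length = l.length := by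
    intro l hl
    induction l with
    | nil => exact ⟨[], by simp, by simp, rfl⟩
    | cons t l ih =>
        obtain ⟨l', h1', h2', h3'⟩ := ih (fun z hz => hl z (List.mem_cons_of_mem t hz))
        obtain ⟨s, hs, hs1⟩ := pushBwd t (hl t (List.mem_cons_self))
        refine ⟨s :: l', ?_, ?_, by simp [h3']⟩
        · intro x hx
          rcases List.mem_cons.mp hx with rfl | hx
          exacts [hs1, h1' x hx]
        · calc g * (t :: l).prod = (g * t) * l.prod := by rw [List.prod_cons, mul_assoc]
            _ = s * (g * l.prod) := by rw [hs, mul_assoc]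
            _ = s * (l'.prod * g) := by rw [h2']
            _ = (s :: l').prod * g := by rw [List.prod_cons, mul_assoc]
  have pushListFwd : ∀ l : List M, (∀ x ∈ l, IsMonAtom x) →
      ∃ l' : List M, (∀ x ∈ l', x ≠ 1) ∧ l.prod * g = g * l'.prod ∧ l'.length = l.length := by
    intro l hl
    induction l with
    | nil => exact ⟨[], by simp, by simp, rfl⟩
    | cons s l ih =>
        obtain ⟨l', h1', h2', h3'⟩ := ih (fun z hz => hl z (List.mem_cons_of_mem s hz))
        obtain ⟨t, ht, ht1⟩ := pushFwd s (hl s (List.mem_cons_self))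
        refine ⟨t :: l', ?_, ?_, by simp [h3']⟩
        · intro x hx
          rcases List.mem_cons.mp hx with rfl | hx
          exacts [ht1, h1' x hx]
        · calc (s :: l).prod * g = s * (l.prod * g) := by rw [List.prod_cons, mul_assoc]
            _ = s * (g * l'.prod) := by rw [h2']
            _ = (s * g) * l'.prod := by rw [mul_assoc]
            _ = g * (t :: l').prod := by rw [ht, List.prod_cons, mul_assoc]
  -- a product of non-identity elements which is an atom is a single factor
  have singleton : ∀ l : List M, (∀ x ∈ l, x ≠ 1) → IsMonAtom l.prod → l.length = 1 := by
    intro l hl hatom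
    match l with
    | [] => exact absurd (by simp : ([] : List M).prod = 1) hatom.1
    | [x] => rfl
    | x :: y :: r =>
        exfalso
        rcases hatom.2 x (y :: r).prod (by rw [List.prod_cons]) with hx | hyr
        · exact hl x (by simp) hx
        · rw [List.prod_cons] at hyr
          exact hl y (by simp) (myMulEqOne ν hν0 hνadd hyr).1
  have pushAtom : ∀ s : M, IsMonAtom s → ∃ t, IsMonAtom t ∧ s * g = g * t := by
    intro s hs
    obtain ⟨t0, hst, ht0⟩ := pushFwd s hs
    obtain ⟨l, hl, hprod⟩ := exists_atomList hgen t0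
    obtain ⟨l', hne, heq, hlen⟩ := pushListBwd l hl
    rw [← hprod] at heq
    have hsl : s = l'.prod := myRCancel hcan (a := g) (by rw [hst, heq])
    have hlen1 : l.length = 1 := by
      rw [← hlen]; exact singleton l' hne (hsl ▸ hs)
    obtain ⟨x, rfl⟩ := List.length_eq_one_iff.mp hlen1
    have hx : IsMonAtom x := hl x (by simp)
    rw [List.prod_singleton] at hprod
    exact ⟨t0, hprod ▸ hx, hst⟩
  have pushAtomInv : ∀ t : M, IsMonAtom t → ∃ s, IsMonAtom s ∧ s * g = g * t := by
    intro t ht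
    obtain ⟨s0, hgt, hs0⟩ := pushBwd t ht
    obtain ⟨l, hl, hprod⟩ := exists_atomList hgen s0
    obtain ⟨l', hne, heq, hlen⟩ := pushListFwd l hl
    rw [← hprod] at heq
    have htl : t = l'.prod := myLCancel hcan (a := g) (by rw [hgt, heq])
    have hlen1 : l.length = 1 := by
      rw [← hlen]; exact singleton l' hne (htl ▸ ht)
    obtain ⟨x, rfl⟩ := List.length_eq_one_iff.mp hlen1
    have hx : IsMonAtom x := hl x (by simp)
    rw [List.prod_singleton] at hprod
    exact ⟨s0, hprod ▸ hx, hgt.symm⟩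
  -- assemble the permutation of the atoms
  have hA : ∀ s : {a : M // IsMonAtom a}, ∃ t : {a : M // IsMonAtom a},
      (s : M) * g = g * (t : M) := by
    intro s; obtain ⟨t, ht, h⟩ := pushAtom s s.2; exact ⟨⟨t, ht⟩, h⟩
  have hB : ∀ t : {a : M // IsMonAtom a}, ∃ s : {a : M // IsMonAtom a},
      (s : M) * g = g * (t : M) := by
    intro t; obtain ⟨s, hs, h⟩ := pushAtomInv t t.2; exact ⟨⟨s, hs⟩, h⟩
  choose A hA' using hA
  choose B hB' using hB
  refine ⟨⟨A, B, ?_, ?_⟩, ?_⟩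
  · intro s
    apply Subtype.ext
    apply myRCancel hcan (a := g)
    rw [hB' (A s), ← hA' s]
  · intro t
    apply Subtype.ext
    apply myLCancel hcan (a := g)
    rw [← hA' (B t), hB' t]
  · intro s
    obtain ⟨h, hh⟩ := hatomL s s.2
    refine ⟨h, hh, ?_⟩
    apply myLCancel hcan (a := (s : M))
    rw [← mul_assoc, ← hh]
    exact hA' s

end Aux


/-- In a Garside monoid there is a unique fundamental element dividing every fundamental
element from the left and from the right: the semigroup of fundamental elements is
singly generated. -/
theorem stmt_8 {M : Type*} [Monoid M] (hcan : IsCancellative M) (hat : IsAtomicMonoid M)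
    (hgen : GeneratedByAtoms M)
    (hlcm : ∀ u v : M, (∃ m, IsRightLcm u v m) ∧ (∃ m, IsLeftLcm u v m))
    (hF : ∃ Δ : M, IsFundamental Δ) :
    ∃! Δhat : M, IsFundamental Δhat ∧
      ∀ Δ : M, IsFundamental Δ → (∃ w, Δ = Δhat * w) ∧ (∃ w, Δ = w * Δhat) := by
  classical
  obtain ⟨ν, hν0, hνadd⟩ := hat
  have hFn : ∃ n, ∃ Δ : M, IsFundamental Δ ∧ ν Δ = n := by
    obtain ⟨Δ, hΔ⟩ := hF; exact ⟨ν Δ, Δ, hΔ, rfl⟩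
  obtain ⟨Δhat, hΔhat, hνΔhat⟩ := Nat.find_spec hFn
  have hmin : ∀ Δ : M, IsFundamental Δ → ν Δhat ≤ ν Δ := by
    intro Δ hΔ
    rw [hνΔhat]
    exact Nat.find_min' hFn ⟨Δ, hΔ, rfl⟩
  have hdvd : ∀ Δ : M, IsFundamental Δ → (∃ w, Δ = Δhat * w) ∧ (∃ w, Δ = w * Δhat) := by
    intro Δ hΔ
    obtain ⟨g, hg⟩ := exists_isLeftGcd hcan ν hν0 hνadd hlcm Δhat Δ
    have hgf := isFundamental_leftGcd hcan ν hν0 hνadd hgen hlcm hΔhat hΔ hg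
    obtain ⟨w, hw⟩ := hg.1
    have h1 : ν g + ν w ≤ ν (g * w) := hνadd g w
    have h2 : ν Δhat ≤ ν g := hmin g hgf
    have h3 : ν (g * w) = ν Δhat := by rw [← hw]
    have hw1 : w = 1 := (hν0 w).mp (by omega)
    rw [hw1, mul_one] at hw
    obtain ⟨w2, hw2⟩ := hg.2.1
    rw [← hw] at hw2
    exact ⟨⟨w2, hw2⟩, fund_rdvd_of_ldvd hcan hgen hΔ hw2⟩
  refine ⟨Δhat, ⟨hΔhat, hdvd⟩, ?_⟩
  rintro y ⟨hyf, hy⟩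
  obtain ⟨a, ha⟩ := (hy Δhat hΔhat).1
  obtain ⟨b, hb⟩ := (hdvd y hyf).1
  exact myAntisymm hcan ν hν0 hνadd hb ha
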